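/- Let λ be an infinite cardinal. Any two disjoint subsets of λ*, each of cardinality smaller than the cofinality of λ, can be separated by disjoint open subsets of λ* (in the topology generated by the ε-neighborhoods). -/

import Mathlib

open Cardinal Topology

/-- For a cardinal `λ`, `λ*` is the set of finite sequences of elements of `λ`
(ordinals less than `λ`), represented as lists over the canonical type of order
type `λ` (i.e. `l.ord.toType`, whose elements correspond to the ordinals `< λ`). -/
abbrev LambdaStar (l : Cardinal) : Type _ := List l.ord.ToType

/-- The `ε`-neighborhood `[η]_ε = {η} ∪ {ρ ∈ λ* : η ⊂ ρ and ρ(|η|) ≥ ε}` of `η ∈ λ*`,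
where `η ⊂ ρ` means that `η` is a proper initial segment of `ρ`, and `|η|` is the
length of `η`. The parameter `ε` ranges over `l.ord.toType`, i.e. over the ordinals `< λ`. -/
def epsNbhd (l : Cardinal) (η : LambdaStar l) (ε : l.ord.ToType) : Set (LambdaStar l) :=
  {η} ∪ {ρ : LambdaStar l |
    List.IsPrefix η ρ ∧ ∃ h : η.length < ρ.length, ε ≤ ρ.get ⟨η.length, h⟩}

/-- The topology on `λ*` generated by the subbase consisting of the `ε`-neighborhoods
`[η]_ε` for `η ∈ λ*` and `ε < λ`. -/
def lambdaStarTopology (l : Cardinal) : TopologicalSpace (LambdaStar l) :=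
  TopologicalSpace.generateFrom
    {s : Set (LambdaStar l) | ∃ (η : LambdaStar l) (ε : l.ord.ToType), s = epsNbhd l η ε}

/-- If `ε` is strictly above all entries of `y` and `z`, and `y ≠ z`, then their
`ε`-neighborhoods are disjoint. -/
lemma epsNbhd_disjoint (l : Cardinal) (ε : l.ord.ToType) {y z : LambdaStar l}
    (hy : ∀ i : Fin y.length, y.get i < ε) (hz : ∀ i : Fin z.length, z.get i < ε)
    (hne : y ≠ z) : Disjoint (epsNbhd l y ε) (epsNbhd l z ε) := by
  -- auxiliary claim: a point of [y]_ε cannot have z as a proper prefix at which it is ≥ ε,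
  -- provided all entries of y are < ε -- handled by symmetry below.
  have aux : ∀ (a b : LambdaStar l), a ≠ b → (∀ i : Fin a.length, a.get i < ε) →
      ∀ ρ, ρ ∈ epsNbhd l a ε → (b <+: ρ) → (∃ h : b.length < ρ.length,
        ε ≤ ρ.get ⟨b.length, h⟩) → (b <+: a) → False := by
    intro a b hab ha ρ hρ hbρ ⟨hlen, hε⟩ hba
    have hlb : b.length < a.length := by
      rcases lt_or_eq_of_le hba.length_le with h | h
      · exact h
      · exact absurd (hba.eq_of_length h).symm hab
    have haρ : a <+: ρ := by
      rcases hρ with h | ⟨h, _⟩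
      · exact h ▸ List.prefix_refl ρ
      · exact h
    have : ρ.get ⟨b.length, hlen⟩ = a.get ⟨b.length, hlb⟩ := by
      simpa using (haρ.getElem hlb).symm
    exact absurd (hε.trans_lt (this ▸ ha ⟨b.length, hlb⟩)) (lt_irrefl ε)
  rw [Set.disjoint_left]
  intro ρ hρy hρz
  -- case on how ρ sits in each neighborhood
  rcases hρy with h1 | ⟨h1p, h1⟩ <;> rcases hρz with h2 | ⟨h2p, h2⟩
  · exact hne (h1.symm.trans h2)
  · -- ρ = y, z proper prefix of ρ = y
    subst h1
    exact aux ρ z hne hy ρ (Or.inl rfl) h2p h2 h2p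
  · subst h2
    exact aux ρ y hne.symm hz ρ (Or.inl rfl) h1p h1 h1p
  · -- both y and z are proper prefixes of ρ; they are comparable
    rcases List.prefix_or_prefix_of_prefix h1p h2p with h | h
    · exact aux z y (fun e => hne e.symm) hz ρ (Or.inr ⟨h2p, h2⟩) h1p h1 h
    · exact aux y z hne hy ρ (Or.inr ⟨h1p, h1⟩) h2p h2 h

/-- Let `λ` be an infinite cardinal. Any two disjoint subsets of `λ*`, each of cardinality
smaller than the cofinality of `λ`, can be separated by disjoint open subsets of `λ*`
(in the topology generated by the `ε`-neighborhoods). -/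
theorem stmt10 (l : Cardinal) (hl : ℵ₀ ≤ l) (Y Z : Set (LambdaStar l))
    (hY : #Y < l.ord.cof) (hZ : #Z < l.ord.cof) (hYZ : Disjoint Y Z) :
    ∃ U V : Set (LambdaStar l),
      @IsOpen (LambdaStar l) (lambdaStarTopology l) U ∧
      @IsOpen (LambdaStar l) (lambdaStarTopology l) V ∧
      Y ⊆ U ∧ Z ⊆ V ∧ Disjoint U V := by
  letI : TopologicalSpace (LambdaStar l) := lambdaStarTopology l
  have hcof : ℵ₀ ≤ l.ord.cof := Ordinal.aleph0_le_cof.2 (Cardinal.isSuccLimit_ord hl)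
  -- the set of all entries of elements of Y ∪ Z
  set T : Set l.ord.ToType := ⋃ η ∈ Y ∪ Z, {v | v ∈ η} with hT
  have hTcard : #T < l.ord.cof := by
    have hS : #(Y ∪ Z : Set (LambdaStar l)) < l.ord.cof :=
      (Cardinal.mk_union_le Y Z).trans_lt (Cardinal.add_lt_of_lt hcof hY hZ)
    rcases lt_or_ge #(Y ∪ Z : Set (LambdaStar l)) ℵ₀ with hfin | hinf
    · have : T.Finite := Set.Finite.biUnion (Cardinal.lt_aleph0_iff_set_finite.1 hfin)
        (fun η _ => List.finite_toSet η)
      exact (Cardinal.lt_aleph0_iff_set_finite.2 this).trans_le hcof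
    · have h1 : #T ≤ #(Y ∪ Z : Set (LambdaStar l)) * ℵ₀ := by
        refine (Cardinal.mk_biUnion_le _ _).trans ?_
        refine mul_le_mul_right (ciSup_le' fun η => ?_) _
        exact ((List.finite_toSet (η : LambdaStar l)).lt_aleph0).le
      rw [Cardinal.mul_aleph0_eq hinf] at h1
      exact h1.trans_lt hS
  -- a strict upper bound ε for T
  have hbdd : Set.Bounded (· < ·) T := by
    haveI : IsWellOrder l.ord.ToType (· < ·) := isWellOrder_lt
    by_contra hnb
    have hc : IsCofinal T := fun a => by
      by_contra h; push_neg at h; exact hnb ⟨a, h⟩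
    have := Ordinal.lt_cof_type hc
    rw [Ordinal.cof_toType] at this
    exact absurd hTcard (not_lt.2 this)
  obtain ⟨ε, hε⟩ := hbdd
  have key : ∀ η ∈ Y ∪ Z, ∀ i : Fin η.length, η.get i < ε := by
    intro η hη i
    exact hε _ (Set.mem_biUnion hη (List.get_mem η i))
  refine ⟨⋃ y ∈ Y, epsNbhd l y ε, ⋃ z ∈ Z, epsNbhd l z ε, ?_, ?_, ?_, ?_, ?_⟩
  · exact isOpen_biUnion fun y _ =>
      TopologicalSpace.isOpen_generateFrom_of_mem ⟨y, ε, rfl⟩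
  · exact isOpen_biUnion fun z _ =>
      TopologicalSpace.isOpen_generateFrom_of_mem ⟨z, ε, rfl⟩
  · exact fun y hy => Set.mem_biUnion hy (Or.inl rfl)
  · exact fun z hz => Set.mem_biUnion hz (Or.inl rfl)
  · refine Set.disjoint_iUnion_left.2 fun y => Set.disjoint_iUnion_left.2 fun hy =>
      Set.disjoint_iUnion_right.2 fun z => Set.disjoint_iUnion_right.2 fun hz => ?_
    exact epsNbhd_disjoint l ε (key y (Or.inl hy)) (key z (Or.inr hz))
      (fun h => hYZ.ne_of_mem hy hz h)
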